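/- Let h > 0 and a, c, p₀ ∈ ℝ, and set b := √(1 + h²·a²). Define p(t) := (b/h) · tan(t·h·c·b + arctan(h·p₀/b)). Then p(0) = p₀, and for every t with t·h·c·b + arctan(h·p₀/b) ∈ (-π/2, π/2) one has p'(t) = c · (1 + h²·(a² + p(t)²)). -/

import Mathlib

open Real

/-- Closed-form exact solution of the Ablowitz–Ladik scalar subsystem
ṗ = c·(1 + h²(a² + p²)): with b := √(1 + h²a²), the function
p(t) := (b/h)·tan(t·h·c·b + arctan(h·p₀/b)) satisfies p(0) = p₀ and, wherever
the tangent argument lies in (-π/2, π/2), p'(t) = c·(1 + h²(a² + p(t)²)). -/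
theorem tan_flow_solves_ablowitz_ladik_ode
    (h a c p₀ : ℝ) (hh : 0 < h) :
    (fun t : ℝ => (Real.sqrt (1 + h ^ 2 * a ^ 2) / h) *
        tan (t * h * c * Real.sqrt (1 + h ^ 2 * a ^ 2)
          + arctan (h * p₀ / Real.sqrt (1 + h ^ 2 * a ^ 2)))) 0 = p₀ ∧
    ∀ t : ℝ,
      t * h * c * Real.sqrt (1 + h ^ 2 * a ^ 2)
          + arctan (h * p₀ / Real.sqrt (1 + h ^ 2 * a ^ 2)) ∈
        Set.Ioo (-(π / 2)) (π / 2) →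
      HasDerivAt (fun t : ℝ => (Real.sqrt (1 + h ^ 2 * a ^ 2) / h) *
          tan (t * h * c * Real.sqrt (1 + h ^ 2 * a ^ 2)
            + arctan (h * p₀ / Real.sqrt (1 + h ^ 2 * a ^ 2))))
        (c * (1 + h ^ 2 * (a ^ 2 +
          ((Real.sqrt (1 + h ^ 2 * a ^ 2) / h) *
            tan (t * h * c * Real.sqrt (1 + h ^ 2 * a ^ 2)
              + arctan (h * p₀ / Real.sqrt (1 + h ^ 2 * a ^ 2)))) ^ 2))) t := by
  set b := Real.sqrt (1 + h ^ 2 * a ^ 2) with hbdef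
  have h1 : (0:ℝ) < 1 + h ^ 2 * a ^ 2 := by positivity
  have hb : 0 < b := Real.sqrt_pos.mpr h1
  have hb2 : b ^ 2 = 1 + h ^ 2 * a ^ 2 := Real.sq_sqrt h1.le
  constructor
  · show b / h * tan (0 * h * c * b + arctan (h * p₀ / b)) = p₀
    rw [zero_mul, zero_mul, zero_mul, zero_add, Real.tan_arctan]
    field_simp
  · intro t ht
    have hcos : Real.cos (t * h * c * b + arctan (h * p₀ / b)) ≠ 0 :=
      (Real.cos_pos_of_mem_Ioo ht).ne'
    have heq : (fun x : ℝ => x * h * c * b + arctan (h * p₀ / b))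
        = fun x : ℝ => x * (h * c * b) + arctan (h * p₀ / b) := by
      funext x; ring
    have hinner : HasDerivAt (fun x : ℝ =>
        x * h * c * b + arctan (h * p₀ / b)) (h * c * b) t := by
      rw [heq]
      exact (hasDerivAt_mul_const (h * c * b)).add_const _
    have htan := (Real.hasDerivAt_tan hcos).comp t hinner
    have hfinal := htan.const_mul (b / h)
    refine hfinal.congr_deriv ?_
    symm
    set T := Real.tan (t * h * c * b + arctan (h * p₀ / b)) with hTdef
    have hc2 : Real.cos (t * h * c * b + arctan (h * p₀ / b)) ^ 2
        = (1 + T ^ 2)⁻¹ := (Real.inv_one_add_tan_sq hcos).symm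
    have hT1 : (0:ℝ) < 1 + T ^ 2 := by positivity
    rw [hc2]
    field_simp
    linear_combination (-c) * hb2
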